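/- If G is a graph on n ≥ 3 vertices with minimum degree at least n/2, then G contains a Hamiltonian cycle. -/

import Mathlib

open SimpleGraph Walk List

section Aux

variable {V : Type*} {G : SimpleGraph V}

private lemma dirac_exists_split {u v : V} (p : G.Walk u v) :
    ∀ i ≤ p.length, ∃ (x : V) (q : G.Walk u x) (r : G.Walk x v),
      p = q.append r ∧ q.length = i := by
  induction p with
  | nil =>
    intro i hi
    obtain rfl := Nat.le_zero.mp hi
    exact ⟨_, .nil, .nil, rfl, rfl⟩
  | @cons a b c h p ih =>
    intro i hi
    cases i with
    | zero => exact ⟨a, .nil, .cons h p, rfl, rfl⟩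
    | succ i =>
      obtain ⟨x, q, r, hpr, hlen⟩ := ih i (by simpa using hi)
      exact ⟨x, .cons h q, r, by simp [hpr], by simp [hlen]⟩

private lemma dirac_end_mem_support_tail {v : V} (c : G.Walk v v) (hc : ¬ c.Nil) :
    v ∈ c.support.tail := by
  have := c.tail.end_mem_support
  rwa [Walk.support_tail_of_not_nil c hc] at this

private lemma dirac_mem_support_iff_mem_tail {a z : V} {d : G.Walk a a} (hd : ¬ d.Nil) :
    z ∈ d.support ↔ z ∈ d.support.tail := by
  constructor
  · intro hz
    rw [Walk.support_eq_cons] at hz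
    rcases List.mem_cons.mp hz with rfl | h
    · exact dirac_end_mem_support_tail d hd
    · exact h
  · exact List.mem_of_mem_tail

private lemma dirac_length_rotate {u v : V} [DecidableEq V] (c : G.Walk v v)
    (h : u ∈ c.support) : (c.rotate u h).length = c.length := by
  have := congr_arg Walk.length (c.take_spec h)
  rw [Walk.length_append] at this
  rw [Walk.rotate, Walk.length_append]
  omega

private lemma dirac_mem_support_rotate_iff {u v z : V} [DecidableEq V] {c : G.Walk v v}
    (hc : ¬ c.Nil) (h : u ∈ c.support) : z ∈ (c.rotate u h).support ↔ z ∈ c.support := by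
  have hr : ¬ (c.rotate u h).Nil := by
    rw [Walk.not_nil_iff_lt_length, dirac_length_rotate]
    rwa [Walk.not_nil_iff_lt_length] at hc
  rw [dirac_mem_support_iff_mem_tail hr, dirac_mem_support_iff_mem_tail hc,
    (Walk.support_rotate c u h).perm.mem_iff]

private lemma dirac_length_eq_one_of_edge_mem {u v : V} {p : G.Walk u v} (hp : p.IsPath)
    (h : s(u, v) ∈ p.edges) : p.length = 1 := by
  cases p with
  | nil => simp at h
  | @cons _ b _ hadj q =>
    rw [Walk.cons_isPath_iff] at hp
    rw [Walk.edges_cons, List.mem_cons] at h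
    rcases h with h | h
    · rw [Sym2.eq_iff] at h
      rcases h with ⟨-, rfl⟩ | ⟨rfl, rfl⟩
      · -- q : G.Walk v v, a path, so q is nil
        have hq : q.Nil := by
          by_contra hq
          have := dirac_end_mem_support_tail q hq
          have hnodup := hp.1.support_nodup
          rw [Walk.support_eq_cons, List.nodup_cons] at hnodup
          exact hnodup.1 this
        rw [Walk.length_cons, Walk.nil_iff_length_eq.mp hq]
      · exact absurd rfl hadj.ne
    · exact absurd (q.fst_mem_support_of_mem_edges h) hp.2

end Aux

/-- Dirac's theorem: a graph on `n ≥ 3` vertices with minimum degree at least `n/2`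
is Hamiltonian. -/
theorem dirac_hamiltonian {n : ℕ} (hn : 3 ≤ n) (G : SimpleGraph (Fin n))
    [DecidableRel G.Adj] (hdeg : ∀ v : Fin n, n ≤ 2 * G.degree v) :
    G.IsHamiltonian := by
  classical
  intro _
  have hcard : Fintype.card (Fin n) = n := Fintype.card_fin n
  -- a longest path
  set Q : ℕ → Prop := fun ℓ => ∃ (u v : Fin n) (p : G.Walk u v), p.IsPath ∧ p.length = ℓ with hQdef
  have hQ0 : Q 0 := ⟨⟨0, by omega⟩, ⟨0, by omega⟩, .nil, Walk.IsPath.nil, Walk.length_nil⟩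
  obtain ⟨v0, vk, P, hP, hPlen⟩ : Q (Nat.findGreatest Q n) :=
    Nat.findGreatest_spec (Nat.zero_le n) hQ0
  set k := Nat.findGreatest Q n with hk
  have hmax : ∀ (u v : Fin n) (p : G.Walk u v), p.IsPath → p.length ≤ k := by
    intro u v p hp
    by_contra hlt
    push_neg at hlt
    have hlt2 : p.length ≤ n := by
      have := hp.length_lt
      rw [hcard] at this
      omega
    exact Nat.findGreatest_is_greatest hlt hlt2 ⟨u, v, p, hp, rfl⟩
  have hkn : k ≤ n - 1 := by
    have := hP.length_lt
    rw [hcard] at this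
    omega
  -- neighbors of the endpoints lie on P
  have hnbr0 : ∀ u, G.Adj v0 u → u ∈ P.support := by
    intro u hu
    by_contra hmem
    have hp' : (P.cons hu.symm).IsPath := hP.cons hmem
    have := hmax _ _ _ hp'
    rw [Walk.length_cons, hPlen] at this
    omega
  have hnbrk : ∀ u, G.Adj vk u → u ∈ P.support := by
    intro u hu
    by_contra hmem
    have hp' : (P.reverse.cons hu.symm).IsPath :=
      hP.reverse.cons (by rwa [Walk.support_reverse, List.mem_reverse])
    have := hmax _ _ _ hp'
    rw [Walk.length_cons, Walk.length_reverse, hPlen] at this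
    omega
  -- index of a vertex on P
  have hidx : ∀ u ∈ P.support, ∃ j, P.getVert j = u ∧ j ≤ k := by
    intro u hu
    obtain ⟨j, h1, h2⟩ := Walk.mem_support_iff_exists_getVert.mp hu
    exact ⟨j, h1, hPlen ▸ h2⟩
  set f : Fin n → ℕ := fun u => if h : u ∈ P.support then (hidx u h).choose else 0 with hfdef
  have hf : ∀ u (h : u ∈ P.support), P.getVert (f u) = u ∧ f u ≤ k := by
    intro u h
    simp only [hfdef, dif_pos h]
    exact (hidx u h).choose_spec
  have hf0 : ∀ u, G.Adj v0 u → P.getVert (f u) = u ∧ f u ≤ k ∧ f u ≠ 0 := by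
    intro u hu
    obtain ⟨h1, h2⟩ := hf u (hnbr0 u hu)
    refine ⟨h1, h2, fun h0 => ?_⟩
    rw [h0, Walk.getVert_zero] at h1
    exact hu.ne h1
  have hfk : ∀ u, G.Adj vk u → P.getVert (f u) = u ∧ f u ≤ k ∧ f u ≠ k := by
    intro u hu
    obtain ⟨h1, h2⟩ := hf u (hnbrk u hu)
    refine ⟨h1, h2, fun h0 => ?_⟩
    rw [h0, ← hPlen, Walk.getVert_length] at h1
    exact hu.ne h1
  -- the two index sets
  set S := (Finset.range k).filter (fun i => G.Adj v0 (P.getVert (i + 1))) with hSdef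
  set T := (Finset.range k).filter (fun i => G.Adj vk (P.getVert i)) with hTdef
  have hScard : G.degree v0 ≤ S.card := by
    rw [← SimpleGraph.card_neighborFinset_eq_degree]
    apply Finset.card_le_card_of_injOn (fun u => f u - 1)
    · intro u hu
      rw [Finset.mem_coe, SimpleGraph.mem_neighborFinset] at hu
      obtain ⟨h1, h2, h3⟩ := hf0 u hu
      rw [hSdef, Finset.mem_coe, Finset.mem_filter, Finset.mem_range]
      beta_reduce
      have he : f u - 1 + 1 = f u := by omega
      exact ⟨by omega, by rw [he, h1]; exact hu⟩
    · intro u1 h1 u2 h2 heq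
      rw [Finset.mem_coe, SimpleGraph.mem_neighborFinset] at h1 h2
      obtain ⟨e1, -, n1⟩ := hf0 u1 h1
      obtain ⟨e2, -, n2⟩ := hf0 u2 h2
      have heq' : f u1 - 1 = f u2 - 1 := heq
      have : f u1 = f u2 := by omega
      rw [← e1, ← e2, this]
  have hTcard : G.degree vk ≤ T.card := by
    rw [← SimpleGraph.card_neighborFinset_eq_degree]
    apply Finset.card_le_card_of_injOn f
    · intro u hu
      rw [Finset.mem_coe, SimpleGraph.mem_neighborFinset] at hu
      obtain ⟨h1, h2, h3⟩ := hfk u hu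
      rw [hTdef, Finset.mem_coe, Finset.mem_filter, Finset.mem_range]
      exact ⟨by omega, by rw [h1]; exact hu⟩
    · intro u1 h1 u2 h2 heq
      rw [Finset.mem_coe, SimpleGraph.mem_neighborFinset] at h1 h2
      obtain ⟨e1, -, -⟩ := hfk u1 h1
      obtain ⟨e2, -, -⟩ := hfk u2 h2
      rw [← e1, ← e2, heq]
  have hSsub : S ⊆ Finset.range k := by rw [hSdef]; exact Finset.filter_subset _ _
  have hTsub : T ⊆ Finset.range k := by rw [hTdef]; exact Finset.filter_subset _ _
  have hScardk : S.card ≤ k := by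
    simpa using Finset.card_le_card hSsub
  have hk2 : 2 ≤ k := by
    have := hdeg v0
    omega
  have h2k : n ≤ 2 * k := by
    have := hdeg v0
    omega
  have hUnion : (S ∪ T).card ≤ k := by
    simpa using Finset.card_le_card (Finset.union_subset hSsub hTsub)
  have hInter : (S ∩ T).Nonempty := by
    rw [← Finset.card_pos]
    have hadd := Finset.card_union_add_card_inter S T
    have hd0 := hdeg v0
    have hdk := hdeg vk
    omega
  obtain ⟨i, hi⟩ := hInter
  rw [Finset.mem_inter, hSdef, hTdef, Finset.mem_filter, Finset.mem_filter,
    Finset.mem_range] at hi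
  obtain ⟨⟨hik, hadj0⟩, -, hadjk⟩ := hi
  -- split P at index i
  obtain ⟨x, q1, r, hsplit, hq1len⟩ := dirac_exists_split P i (by omega)
  have hrlen : r.length = k - i := by
    have := congr_arg Walk.length hsplit
    rw [Walk.length_append] at this
    omega
  have hrnil : ¬ r.Nil := by
    rw [Walk.not_nil_iff_lt_length]
    omega
  obtain ⟨y, hxy, q2, rfl⟩ := Walk.not_nil_iff.mp hrnil
  have hgx : P.getVert i = x := by
    rw [hsplit, Walk.getVert_append, if_neg (by omega), hq1len, Nat.sub_self,
      Walk.getVert_zero]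
  have hgy : P.getVert (i + 1) = y := by
    rw [hsplit, Walk.getVert_append, if_neg (by omega), hq1len, Nat.add_sub_cancel_left,
      Walk.getVert_cons_succ, Walk.getVert_zero]
  rw [hgy] at hadj0
  rw [hgx] at hadjk
  -- the crossing cycle C
  set D : G.Walk y v0 := q2.append (Walk.cons hadjk q1.reverse) with hDdef
  have hDsupp : D.support ~ P.support := by
    rw [hDdef, hsplit, Walk.support_append, Walk.support_append, Walk.support_cons,
      Walk.support_cons, List.tail_cons, List.tail_cons, Walk.support_reverse]
    exact (List.Perm.append_left _ (List.reverse_perm _)).trans List.perm_append_comm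
  have hDpath : D.IsPath := Walk.IsPath.mk' (hDsupp.nodup_iff.mpr hP.support_nodup)
  have hDlen : D.length = k := by
    have hc := congr_arg Walk.length hsplit
    rw [Walk.length_append, Walk.length_cons] at hc
    rw [hDdef, Walk.length_append, Walk.length_cons, Walk.length_reverse]
    omega
  set C : G.Walk v0 v0 := Walk.cons hadj0 D with hCdef
  have hCcyc : C.IsCycle := by
    rw [hCdef, Walk.cons_isCycle_iff]
    refine ⟨hDpath, fun he => ?_⟩
    have := dirac_length_eq_one_of_edge_mem hDpath (by rwa [Sym2.eq_swap] at he)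
    omega
  have hCsupp : ∀ z, z ∈ C.support ↔ z ∈ P.support := by
    intro z
    rw [hCdef, Walk.support_cons, List.mem_cons, hDsupp.mem_iff]
    constructor
    · rintro (rfl | h)
      · exact P.start_mem_support
      · exact h
    · exact Or.inr
  have hCnil : ¬ C.Nil := hCcyc.not_nil
  have hPcard : P.support.toFinset.card = k + 1 := by
    rw [List.toFinset_card_of_nodup hP.support_nodup, Walk.length_support, hPlen]
  -- C visits every vertex
  have hall : ∀ w : Fin n, w ∈ C.support := by
    by_contra hw
    push_neg at hw
    obtain ⟨w, hw⟩ := hw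
    have hwP : w ∉ P.support := fun h => hw ((hCsupp w).mpr h)
    have hnb : ∃ b, G.Adj w b ∧ b ∈ P.support := by
      by_contra hno
      push_neg at hno
      have hsub : G.neighborFinset w ⊆ Finset.univ \ insert w P.support.toFinset := by
        intro b hb
        rw [SimpleGraph.mem_neighborFinset] at hb
        rw [Finset.mem_sdiff]
        refine ⟨Finset.mem_univ _, fun hmem => ?_⟩
        rcases Finset.mem_insert.mp hmem with rfl | hmem
        · exact G.loopless.irrefl _ hb
        · exact hno b hb (List.mem_toFinset.mp hmem)
      have h1 := Finset.card_le_card hsub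
      rw [Finset.card_sdiff_of_subset (Finset.subset_univ _),
        Finset.card_insert_of_notMem (fun h => hwP (List.mem_toFinset.mp h)), hPcard,
        Finset.card_univ, hcard, SimpleGraph.card_neighborFinset_eq_degree] at h1
      have := hdeg w
      omega
    obtain ⟨b, hwb, hbP⟩ := hnb
    have hbC : b ∈ C.support := (hCsupp b).mpr hbP
    set q := C.rotate b hbC with hqdef
    have hqlen : q.length = k + 1 := by
      rw [hqdef, dirac_length_rotate, hCdef, Walk.length_cons, hDlen]
    have hqcyc : q.IsCycle := hCcyc.rotate hbC
    have hqnil : ¬ q.Nil := hqcyc.not_nil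
    have hqtail : q.tail.IsPath := Walk.IsPath.mk' (by
      rw [Walk.support_tail_of_not_nil _ hqnil]
      exact ((Walk.isCycle_def _).mp hqcyc).2.2)
    have hWpath : (Walk.cons hwb q.tail.reverse).IsPath := by
      refine hqtail.reverse.cons ?_
      rw [Walk.support_reverse, List.mem_reverse, Walk.support_tail_of_not_nil _ hqnil]
      intro hmem
      exact hw ((dirac_mem_support_rotate_iff hCnil hbC).mp (List.mem_of_mem_tail hmem))
    have hWlen := hmax _ _ _ hWpath
    rw [Walk.length_cons, Walk.length_reverse] at hWlen
    have := Walk.length_tail_add_one hqnil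
    omega
  -- conclude
  refine ⟨v0, C, ?_⟩
  rw [Walk.isHamiltonianCycle_isCycle_and_isHamiltonian_tail]
  refine ⟨hCcyc, fun z => ?_⟩
  rw [Walk.support_tail_of_not_nil _ hCnil]
  exact List.count_eq_one_of_mem ((Walk.isCycle_def _).mp hCcyc).2.2
    ((dirac_mem_support_iff_mem_tail hCnil).mp (hall z))
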